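/- arXiv:1501.06192 — 2 statements merged into one kernel-verified Lean document; each statement's English description precedes it below -/
import Mathlib

section
/- (Hartman–Stampacchia maximum principle) Let τ : ℝ → [0,∞) be a non-increasing function and suppose there exist constants C > 0, k₀ ≥ 0, δ > 0 and α ∈ [0, 1+δ] such that ∫_k^∞ τ(t) dt ≤ C k^α (τ(k))^{1+δ} for all k ≥ k₀. Then there exists a number k_max such that τ(k) = 0 for all k ≥ k_max. -/
open MeasureTheory Set

open Filter Topology

private lemma pow_rpow_comm (x : ℝ) (hx : 0 ≤ x) (y : ℝ) (n : ℕ) :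
    (x ^ n) ^ y = (x ^ y) ^ n := by
  rw [← Real.rpow_natCast x n, ← Real.rpow_natCast (x ^ y) n, ← Real.rpow_mul hx,
    ← Real.rpow_mul hx, mul_comm]

/-- Hartman–Stampacchia maximum principle: a non-increasing nonnegative
function `τ` whose tail integrals satisfy `∫_k^∞ τ ≤ C k^α (τ k)^{1+δ}` for
`k ≥ k₀` vanishes identically beyond some finite level `k_max`. -/
theorem hartman_stampacchia (τ : ℝ → ℝ) (hpos : ∀ t, 0 ≤ τ t) (hmono : Antitone τ)
    (C k₀ δ α : ℝ) (hC : 0 < C) (hk₀ : 0 ≤ k₀) (hδ : 0 < δ)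
    (hα : α ∈ Set.Icc (0 : ℝ) (1 + δ))
    (hint : ∀ k ≥ k₀, IntegrableOn τ (Set.Ioi k))
    (hineq : ∀ k ≥ k₀, ∫ t in Set.Ioi k, τ t ≤ C * k ^ α * (τ k) ^ (1 + δ)) :
    ∃ kmax : ℝ, ∀ k ≥ kmax, τ k = 0 := by
  set φ : ℝ → ℝ := fun k => ∫ t in Set.Ioi k, τ t with hφdef
  have hφnonneg : ∀ k, 0 ≤ φ k := fun k =>
    setIntegral_nonneg measurableSet_Ioi (fun x _ => hpos x)
  have hsplit : ∀ a b, k₀ ≤ a → a ≤ b →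
      φ a = (∫ t in Set.Ioc a b, τ t) + φ b := by
    intro a b ha hab
    have h : Set.Ioi a = Set.Ioc a b ∪ Set.Ioi b := (Set.Ioc_union_Ioi_eq_Ioi hab).symm
    rw [hφdef]
    simp only
    rw [h]
    exact setIntegral_union (Set.Ioc_disjoint_Ioi le_rfl) measurableSet_Ioi
      ((hint a ha).mono_set Set.Ioc_subset_Ioi_self) (hint b (ha.trans hab))
  have hIocnn : ∀ a b : ℝ, 0 ≤ ∫ t in Set.Ioc a b, τ t := fun a b =>
    setIntegral_nonneg measurableSet_Ioc (fun x _ => hpos x)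
  have hanti : ∀ a b, k₀ ≤ a → a ≤ b → φ b ≤ φ a := by
    intro a b ha hab
    have h1 := hsplit a b ha hab
    have h2 := hIocnn a b
    linarith
  have hkey : ∀ a b, k₀ ≤ a → a ≤ b → (b - a) * τ b ≤ φ a := by
    intro a b ha hab
    have h1 := setIntegral_ge_of_const_le (μ := volume) (c := τ b) (f := τ)
      measurableSet_Ioc (by rw [Real.volume_Ioc]; exact ENNReal.ofReal_ne_top)
      (fun x hx => hmono hx.2) ((hint a ha).mono_set Set.Ioc_subset_Ioi_self)
    rw [Real.volume_real_Ioc_of_le hab, smul_eq_mul] at h1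
    have h2 := hsplit a b ha hab
    have h3 := hφnonneg b
    nlinarith [h1]
  have hφ0 : Tendsto φ atTop (𝓝 0) := by
    have h1 := intervalIntegral_tendsto_integral_Ioi k₀ (hint k₀ le_rfl) tendsto_id
    have h2 : Tendsto (fun k => φ k₀ - ∫ x in k₀..k, τ x) atTop (𝓝 (φ k₀ - φ k₀)) :=
      tendsto_const_nhds.sub h1
    rw [sub_self] at h2
    refine h2.congr' ?_
    filter_upwards [eventually_ge_atTop k₀] with k hk
    rw [intervalIntegral.integral_of_le hk]
    have := hsplit k₀ k le_rfl hk
    linarith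
  -- constants
  set β := 1 + δ with hβdef
  have hβpos : 0 < β := by rw [hβdef]; linarith
  have hαβ : α ≤ β := hα.2
  have hα0 : 0 ≤ α := hα.1
  set r : ℝ := (2:ℝ) ^ (-(β/δ)) with hrdef
  have hr0 : 0 < r := Real.rpow_pos_of_pos two_pos _
  have hr1 : r < 1 := by
    apply Real.rpow_lt_one_of_one_lt_of_neg one_lt_two
    have : 0 < β / δ := div_pos hβpos hδ
    linarith
  have h2βpos : 0 < (2:ℝ) ^ β := Real.rpow_pos_of_pos two_pos _
  have hrδ2β : r ^ δ * 2 ^ β = 1 := by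
    rw [hrdef, ← Real.rpow_mul (by norm_num : (0:ℝ) ≤ 2), ← Real.rpow_add two_pos]
    rw [show -(β/δ) * δ + β = 0 by field_simp; ring, Real.rpow_zero]
  have hrβ2β : r ^ β * 2 ^ β = r := by
    rw [hβdef, Real.rpow_add hr0, Real.rpow_one]
    calc r * r ^ δ * 2 ^ β = r * (r ^ δ * 2 ^ β) := by ring
    _ = r := by rw [hrδ2β]; ring
  -- choose K
  have hε1pos : 0 < r / (C * 2 ^ β * 2 ^ β) := by positivity
  set ε := (r / (C * 2 ^ β * 2 ^ β)) ^ (1/δ) with hεdef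
  have hεpos : 0 < ε := Real.rpow_pos_of_pos hε1pos _
  have hεδ : ε ^ δ = r / (C * 2 ^ β * 2 ^ β) := by
    rw [hεdef, ← Real.rpow_mul hε1pos.le, one_div, inv_mul_cancel₀ hδ.ne', Real.rpow_one]
  obtain ⟨K, hKφ, hKmax⟩ :=
    ((hφ0.eventually (gt_mem_nhds hεpos)).and (eventually_ge_atTop (max k₀ 1))).exists
  have hKk₀ : k₀ ≤ K := le_trans (le_max_left _ _) hKmax
  have hK1 : 1 ≤ K := le_trans (le_max_right _ _) hKmax
  have hK0 : 0 < K := by linarith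
  -- smallness
  have hSmall : C * (2*K) ^ α * (φ K) ^ δ * 2 ^ β ≤ r * K ^ β := by
    have h2K1 : (1:ℝ) ≤ 2*K := by linarith
    have hα2 : (2*K) ^ α ≤ (2*K) ^ β := Real.rpow_le_rpow_of_exponent_le h2K1 hαβ
    have h2Kβ : (2*K) ^ β = 2 ^ β * K ^ β := Real.mul_rpow (by norm_num) hK0.le
    have hφKδ : (φ K) ^ δ ≤ ε ^ δ := Real.rpow_le_rpow (hφnonneg K) hKφ.le hδ.le
    have hKβpos : 0 < K ^ β := Real.rpow_pos_of_pos hK0 _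
    have hm1 : C * (2*K) ^ α * (φ K) ^ δ * 2 ^ β ≤ C * (2*K) ^ β * (ε ^ δ) * 2 ^ β := by
      apply mul_le_mul_of_nonneg_right _ h2βpos.le
      exact mul_le_mul (mul_le_mul_of_nonneg_left hα2 hC.le) hφKδ
        (Real.rpow_nonneg (hφnonneg K) δ) (by positivity)
    calc C * (2*K) ^ α * (φ K) ^ δ * 2 ^ β ≤ C * (2*K) ^ β * (ε ^ δ) * 2 ^ β := hm1
    _ = r * K ^ β := by rw [h2Kβ, hεδ]; field_simp
  -- the sequence
  set ks : ℕ → ℝ := fun n => K * (2 - (2:ℝ)⁻¹ ^ n) with hksdef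
  have hpow_le1 : ∀ n : ℕ, (2:ℝ)⁻¹ ^ n ≤ 1 := fun n =>
    pow_le_one₀ (by norm_num) (by norm_num)
  have hpow_pos : ∀ n : ℕ, (0:ℝ) < (2:ℝ)⁻¹ ^ n := fun n => by positivity
  have hks_ge : ∀ n, K ≤ ks n := by
    intro n
    have h1 := hpow_le1 n
    rw [hksdef]; simp only; nlinarith
  have hks_le : ∀ n, ks n ≤ 2*K := by
    intro n
    have h1 := hpow_pos n
    rw [hksdef]; simp only; nlinarith
  have hks_step : ∀ n, ks (n+1) - ks n = K * (2:ℝ)⁻¹ ^ (n+1) := by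
    intro n
    rw [hksdef]; simp only; rw [pow_succ]; ring
  -- endgame: φ (2K) ≤ 0
  have hφ2K : φ (2*K) ≤ 0 := by
    rcases (hφnonneg K).eq_or_lt with h0 | hφKpos
    · have := hanti K (2*K) hKk₀ (by linarith)
      linarith
    · -- main induction
      have main : ∀ n, φ (ks n) ≤ φ K * r ^ n := by
        intro n
        induction n with
        | zero =>
          have : ks 0 = K := by rw [hksdef]; simp; ring
          rw [this]; simp
        | succ n ih =>
          have hab : ks n ≤ ks (n+1) := by
            have := hks_step n
            have := hpow_pos (n+1)
            nlinarith
          have hk₀a : k₀ ≤ ks n := hKk₀.trans (hks_ge n)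
          have hba : 0 < ks (n+1) - ks n := by
            rw [hks_step n]; positivity
          have hτb : (ks (n+1) - ks n) * τ (ks (n+1)) ≤ φ (ks n) :=
            hkey _ _ hk₀a hab
          set M : ℝ := (2:ℝ) ^ (n+1) / K with hMdef
          have hM0 : 0 < M := by positivity
          have hbainv : (ks (n+1) - ks n)⁻¹ = M := by
            rw [hks_step n, hMdef]
            rw [inv_pow]
            field_simp
          have hτb2 : τ (ks (n+1)) ≤ φ (ks n) * M := by
            rw [← hbainv]
            have h := mul_le_mul_of_nonneg_right hτb (inv_nonneg.mpr hba.le)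
            rw [mul_comm (ks (n+1) - ks n) (τ (ks (n+1))), mul_assoc,
              mul_inv_cancel₀ hba.ne', mul_one] at h
            exact h
          have hbk₀ : k₀ ≤ ks (n+1) := hKk₀.trans (hks_ge _)
          have hbnn : (0:ℝ) ≤ ks (n+1) := le_trans hK0.le (hks_ge _)
          have h1 : φ (ks (n+1)) ≤ C * (ks (n+1)) ^ α * τ (ks (n+1)) ^ β :=
            hineq _ hbk₀
          have hτbnn : 0 ≤ τ (ks (n+1)) := hpos _
          have hQnn : 0 ≤ φ K * r ^ n := by positivity
          have h2 : τ (ks (n+1)) ^ β ≤ ((φ K * r ^ n) * M) ^ β := by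
            apply Real.rpow_le_rpow hτbnn _ hβpos.le
            exact hτb2.trans (mul_le_mul_of_nonneg_right ih hM0.le)
          have hbα : (ks (n+1)) ^ α ≤ (2*K) ^ α :=
            Real.rpow_le_rpow hbnn (hks_le _) hα0
          have h3 : φ (ks (n+1)) ≤ C * (2*K) ^ α * ((φ K * r ^ n) * M) ^ β := by
            refine h1.trans ?_
            exact mul_le_mul (mul_le_mul_of_nonneg_left hbα hC.le) h2
              (Real.rpow_nonneg hτbnn _) (by positivity)
          have hexp : ((φ K * r ^ n) * M) ^ β
              = (φ K) ^ β * ((r ^ β) ^ n * ((2:ℝ) ^ β) ^ (n+1)) / K ^ β := by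
            rw [hMdef, Real.mul_rpow (by positivity) hM0.le,
              Real.mul_rpow hφKpos.le (by positivity),
              Real.div_rpow (by positivity) hK0.le,
              pow_rpow_comm r hr0.le β n,
              pow_rpow_comm 2 (by norm_num : (0:ℝ) ≤ 2) β (n+1)]
            ring
          have hgeo : (r ^ β) ^ n * ((2:ℝ) ^ β) ^ (n+1) = r ^ n * 2 ^ β := by
            rw [pow_succ, ← mul_assoc, ← mul_pow, hrβ2β]
          have hφKβ : (φ K) ^ β = φ K * (φ K) ^ δ := by
            rw [hβdef, Real.rpow_add hφKpos, Real.rpow_one]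
          have hKβpos : 0 < K ^ β := Real.rpow_pos_of_pos hK0 _
          calc φ (ks (n+1)) ≤ C * (2*K) ^ α * ((φ K * r ^ n) * M) ^ β := h3
          _ = (C * (2*K) ^ α * (φ K) ^ δ * 2 ^ β) * (φ K * r ^ n) / K ^ β := by
              rw [hexp, hgeo, hφKβ]; ring
          _ ≤ (r * K ^ β) * (φ K * r ^ n) / K ^ β := by
              have h := mul_le_mul_of_nonneg_right hSmall hQnn
              exact (div_le_div_iff_of_pos_right hKβpos).mpr h
          _ = φ K * r ^ (n+1) := by rw [pow_succ]; field_simp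
      have hlim : Tendsto (fun n : ℕ => φ K * r ^ n) atTop (𝓝 0) := by
        have := (tendsto_pow_atTop_nhds_zero_of_lt_one hr0.le hr1).const_mul (φ K)
        simpa using this
      refine ge_of_tendsto' hlim (fun n => ?_)
      exact (hanti (ks n) (2*K) (hKk₀.trans (hks_ge n)) (hks_le n)).trans (main n)
  have hφ2K0 : φ (2*K) = 0 := le_antisymm hφ2K (hφnonneg _)
  refine ⟨2*K + 1, fun k hk => ?_⟩
  have hτ1 : τ (2*K+1) ≤ 0 := by
    have h := hkey (2*K) (2*K+1) (by linarith) (by linarith)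
    rw [hφ2K0] at h
    linarith
  exact le_antisymm ((hmono hk).trans (by linarith)) (hpos k)
end

section
/- Let n ≥ 2, 1 < m ≤ n, 0 < R < 1, and B_R = {x ∈ ℝⁿ : |x| < R}. The vector field φ(x) := x / (|x|^m |log|x||^{m−1}) belongs to L^{n/(m−1)}(B_R; ℝⁿ), but for every ε > 0, φ does not belong to the Morrey space L^{p', n−(m−1)p'+ε}(B_R; ℝⁿ) for any p' ∈ (1, n/(m−1)]. -/
open MeasureTheory Metric Set
open scoped ENNReal NNReal
open Filter
open scoped Topology

noncomputable section

/-- Membership in the vector-valued Morrey space `L^{s,θ}(B_R; ℝⁿ)`. -/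
def MemMorreyVec (n : ℕ) (Ω : Set (EuclideanSpace ℝ (Fin n)))
    (u : EuclideanSpace ℝ (Fin n) → EuclideanSpace ℝ (Fin n)) (s θ : ℝ) : Prop :=
  MemLp u (ENNReal.ofReal s) (volume.restrict Ω) ∧
    ∃ C : ℝ≥0∞, C ≠ ⊤ ∧ ∀ x₀ ∈ Ω, ∀ ρ : ℝ, 0 < ρ →
      ∫⁻ x in ball x₀ ρ ∩ Ω, (‖u x‖₊ : ℝ≥0∞) ^ s ≤ C * ENNReal.ofReal (ρ ^ θ)

namespace SharpnessAux

lemma norm_phi {n : ℕ} (m : ℝ) (x : EuclideanSpace ℝ (Fin n))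
    (h0 : 0 < ‖x‖) (h1 : ‖x‖ < 1) :
    ‖(1 / (‖x‖ ^ m * |Real.log ‖x‖| ^ (m - 1))) • x‖
      = ‖x‖ ^ (1 - m) * (-Real.log ‖x‖) ^ (1 - m) := by
  have hlog : 0 < -Real.log ‖x‖ := by
    have := Real.log_neg h0 h1; linarith
  have habs : |Real.log ‖x‖| = -Real.log ‖x‖ := abs_of_neg (by linarith)
  rw [norm_smul, habs, Real.norm_eq_abs, abs_of_nonneg (by positivity)]
  have e1 : ‖x‖ ^ (1 - m) = ‖x‖ * (‖x‖ ^ m)⁻¹ := by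
    rw [sub_eq_add_neg, Real.rpow_add h0, Real.rpow_one, Real.rpow_neg h0.le]
  have e2 : (-Real.log ‖x‖) ^ (1 - m) = ((-Real.log ‖x‖) ^ (m - 1))⁻¹ := by
    rw [show (1 - m) = -(m-1) by ring, Real.rpow_neg hlog.le]
  rw [e1, e2, one_div, mul_inv]
  ring

end SharpnessAux

namespace SharpnessAux

lemma meas_phi {n : ℕ} (m : ℝ) :
    Measurable (fun x : EuclideanSpace ℝ (Fin n) =>
      (1 / (‖x‖ ^ m * |Real.log ‖x‖| ^ (m - 1))) • x) := by
  refine Measurable.smul (f := fun x : EuclideanSpace ℝ (Fin n) => 1 / (‖x‖ ^ m * |Real.log ‖x‖| ^ (m - 1))) ?_ measurable_id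
  apply Measurable.div measurable_const
  apply Measurable.mul
  · exact measurable_norm.pow measurable_const
  · exact (Real.measurable_log.comp measurable_norm).abs.pow measurable_const

end SharpnessAux

namespace SharpnessAux

lemma summable_aux {c : ℝ} (hc : 0 < c) {n : ℕ} (hn : 2 ≤ n) :
    ∑' k : ℕ, ENNReal.ofReal ((2:ℝ) ^ (n:ℝ) * (((k:ℝ)+1) * c) ^ (-(n:ℝ))) ≠ ∞ := by
  set K : ℝ := (2:ℝ) ^ (n:ℝ) * c ^ (-(n:ℝ)) with hK
  have hsum : Summable (fun k : ℕ => K * (1 / ((k:ℝ)+1)^2)) := by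
    apply Summable.mul_left
    have h := (summable_nat_add_iff (f := fun k : ℕ => 1 / ((k:ℝ))^2) 1).mpr
      (Real.summable_one_div_nat_pow.mpr one_lt_two)
    refine h.congr fun k => ?_
    push_cast
    ring_nf
  have hterm : ∀ k : ℕ, (2:ℝ) ^ (n:ℝ) * (((k:ℝ)+1) * c) ^ (-(n:ℝ))
      ≤ K * (1 / ((k:ℝ)+1)^2) := by
    intro k
    have hk0 : (0:ℝ) ≤ (k:ℝ) := Nat.cast_nonneg k
    have hk1 : (1:ℝ) ≤ (k:ℝ)+1 := by linarith
    have hn2 : (2:ℝ) ≤ (n:ℝ) := by exact_mod_cast hn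
    have e1 : (((k:ℝ)+1) * c) ^ (-(n:ℝ)) = ((k:ℝ)+1) ^ (-(n:ℝ)) * c ^ (-(n:ℝ)) :=
      Real.mul_rpow (by linarith) hc.le
    have e2 : ((k:ℝ)+1) ^ (-(n:ℝ)) ≤ ((k:ℝ)+1) ^ (-(2:ℝ)) :=
      Real.rpow_le_rpow_of_exponent_le hk1 (by linarith)
    have e3 : ((k:ℝ)+1) ^ (-(2:ℝ)) = 1 / ((k:ℝ)+1)^2 := by
      rw [Real.rpow_neg (by linarith), ← Real.rpow_natCast ((k:ℝ)+1) 2, one_div]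
      norm_num
    have h2 : (0:ℝ) ≤ (2:ℝ)^(n:ℝ) := by positivity
    have h3 : (0:ℝ) ≤ c ^ (-(n:ℝ)) := by positivity
    rw [e1]
    calc (2:ℝ)^(n:ℝ) * (((k:ℝ)+1) ^ (-(n:ℝ)) * c ^ (-(n:ℝ)))
        ≤ (2:ℝ)^(n:ℝ) * (((k:ℝ)+1) ^ (-(2:ℝ)) * c ^ (-(n:ℝ))) :=
          mul_le_mul_of_nonneg_left (mul_le_mul_of_nonneg_right e2 h3) h2
      _ = K * (1/((k:ℝ)+1)^2) := by rw [← e3, hK]; ring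
  apply ne_of_lt
  calc ∑' k : ℕ, ENNReal.ofReal ((2:ℝ) ^ (n:ℝ) * (((k:ℝ)+1) * c) ^ (-(n:ℝ)))
      ≤ ∑' k : ℕ, ENNReal.ofReal (K * (1 / ((k:ℝ)+1)^2)) :=
        ENNReal.tsum_le_tsum (fun k => ENNReal.ofReal_le_ofReal (hterm k))
    _ = ENNReal.ofReal (∑' k : ℕ, K * (1 / ((k:ℝ)+1)^2)) :=
        (ENNReal.ofReal_tsum_of_nonneg (fun k => by positivity) hsum).symm
    _ < ∞ := ENNReal.ofReal_lt_top

end SharpnessAux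

namespace SharpnessAux

lemma exists_annulus {R t : ℝ} (hR : 0 < R) (ht : 0 < t) (htR : t < R) :
    ∃ k : ℕ, R * (1/2:ℝ)^(k+1) ≤ t ∧ t < R * (1/2:ℝ)^k := by
  have hhalf : (1/2:ℝ) < 1 := by norm_num
  have hex : ∃ j : ℕ, R * (1/2:ℝ)^(j+1) ≤ t := by
    obtain ⟨j, hj⟩ := exists_pow_lt_of_lt_one (div_pos ht hR) hhalf
    have hj' : (1/2:ℝ)^j * R < t := (lt_div_iff₀ hR).mp hj
    have hp : (1/2:ℝ)^(j+1) ≤ (1/2:ℝ)^j := by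
      rw [pow_succ]
      nlinarith [pow_nonneg (by norm_num : (0:ℝ) ≤ 1/2) j]
    exact ⟨j, by nlinarith [mul_le_mul_of_nonneg_left hp hR.le]⟩
  classical
  let k := Nat.find hex
  refine ⟨k, Nat.find_spec hex, ?_⟩
  rcases Nat.eq_zero_or_pos k with hk | hk
  · rw [hk]; simpa using htR
  · have := Nat.find_min hex (m := k - 1) (by omega)
    push_neg at this
    have hk1 : k - 1 + 1 = k := by omega
    rwa [hk1] at this

end SharpnessAux

namespace SharpnessAux

lemma lintegral_phi_lt_top (n : ℕ) (hn : 2 ≤ n) (m R : ℝ) (hm : 1 < m) (hmn : m ≤ (n:ℝ))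
    (hR₀ : 0 < R) (hR₁ : R < 1) :
    ∫⁻ x in ball (0 : EuclideanSpace ℝ (Fin n)) R,
      (‖(1 / (‖x‖ ^ m * |Real.log ‖x‖| ^ (m - 1))) • x‖₊ : ℝ≥0∞) ^ ((n:ℝ)/(m-1)) < ∞ := by
  haveI : Nonempty (Fin n) := ⟨⟨0, by omega⟩⟩
  set E := EuclideanSpace ℝ (Fin n)
  set φ : E → E := fun x => (1 / (‖x‖ ^ m * |Real.log ‖x‖| ^ (m - 1))) • x with hφ
  set s : ℝ := (n:ℝ)/(m-1) with hsdef
  set f : E → ℝ≥0∞ := fun x => (‖φ x‖₊ : ℝ≥0∞) ^ s with hf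
  have hm1 : 0 < m - 1 := by linarith
  have hnpos : (0:ℝ) < n := by positivity
  have hs : 0 < s := div_pos hnpos hm1
  have hms : (1-m) * s = -(n:ℝ) := by
    field_simp [hsdef]
    have h' : (m-1) * s = n := by rw [hsdef]; field_simp [hm1.ne']
    linear_combination -h'
  set c : ℝ := min (Real.log 2) (-Real.log R) with hc
  have hc0 : 0 < c := lt_min (Real.log_pos one_lt_two)
    (by simpa using neg_pos.mpr (Real.log_neg hR₀ hR₁))
  set A : ℕ → Set E := fun k => ball 0 (R*(1/2:ℝ)^k) \ ball 0 (R*(1/2:ℝ)^(k+1)) with hA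
  have hcover : ball (0:E) R ⊆ {0} ∪ ⋃ k, A k := by
    intro x hx
    rcases eq_or_ne x 0 with rfl | hx0
    · exact Or.inl rfl
    right
    have hx1 : 0 < ‖x‖ := norm_pos_iff.mpr hx0
    have hx2 : ‖x‖ < R := by
      simp only [mem_ball, dist_zero_right] at hx
      exact hx
    obtain ⟨k, hk1, hk2⟩ := exists_annulus hR₀ hx1 hx2
    refine mem_iUnion.mpr ⟨k, ?_, ?_⟩
    · simp only [mem_ball, dist_zero_right]
      exact hk2
    · simp only [mem_ball, dist_zero_right, not_lt]
      exact hk1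
  set V : ℝ≥0∞ := volume (ball (0:E) 1) with hV
  have hVtop : V ≠ ∞ := measure_ball_lt_top.ne
  -- bound on each annulus
  have hbound : ∀ k : ℕ, ∫⁻ x in A k, f x
      ≤ ENNReal.ofReal ((2:ℝ) ^ (n:ℝ) * (((k:ℝ)+1) * c) ^ (-(n:ℝ))) * V := by
    intro k
    set rk : ℝ := R * (1/2:ℝ)^k with hrk
    set rk1 : ℝ := R * (1/2:ℝ)^(k+1) with hrk1
    have hrkpos : 0 < rk := by rw [hrk]; positivity
    have hrk1pos : 0 < rk1 := by rw [hrk1]; positivity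
    have hrkle : rk ≤ R := by
      rw [hrk]
      nlinarith [pow_le_one₀ (by norm_num : (0:ℝ) ≤ 1/2) (by norm_num : (1/2:ℝ) ≤ 1) (n := k)]
    set M : ℝ := rk1 ^ (1-m) * (((k:ℝ)+1)*c) ^ (1-m) with hM
    have hM0 : 0 ≤ M := by
      rw [hM]; positivity
    have hAk : A k ⊆ ball (0:E) rk := diff_subset
    -- pointwise bound
    have hpt : ∀ x ∈ A k, f x ≤ ENNReal.ofReal M ^ s := by
      intro x hx
      have hxlt : ‖x‖ < rk := by
        have := hx.1
        simp only [mem_ball, dist_zero_right] at this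
        exact this
      have hxge : rk1 ≤ ‖x‖ := by
        have := hx.2
        simp only [mem_ball, dist_zero_right, not_lt] at this
        exact this
      have hx0 : 0 < ‖x‖ := lt_of_lt_of_le hrk1pos hxge
      have hxlt1 : ‖x‖ < 1 := lt_of_lt_of_le hxlt (le_trans hrkle hR₁.le)
      have hnorm := norm_phi m x hx0 hxlt1
      have hlogbd : ((k:ℝ)+1)*c ≤ -Real.log ‖x‖ := by
        have h1 : Real.log ‖x‖ < Real.log rk := Real.log_lt_log hx0 hxlt
        have h2 : Real.log rk = Real.log R - (k:ℝ) * Real.log 2 := by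
          rw [hrk, Real.log_mul hR₀.ne' (by positivity), Real.log_pow]
          push_cast
          rw [Real.log_div one_ne_zero two_ne_zero, Real.log_one]
          ring
        have h3 : (k:ℝ) * c ≤ (k:ℝ) * Real.log 2 :=
          mul_le_mul_of_nonneg_left (min_le_left _ _) (Nat.cast_nonneg k)
        have h4 : c ≤ -Real.log R := min_le_right _ _
        nlinarith
      have hlogpos : 0 < -Real.log ‖x‖ := lt_of_lt_of_le (by positivity) hlogbd
      have hφbd : ‖φ x‖ ≤ M := by
        rw [hφ]
        simp only
        rw [hnorm, hM]
        have b1 : ‖x‖ ^ (1-m) ≤ rk1 ^ (1-m) :=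
          Real.rpow_le_rpow_of_nonpos hrk1pos hxge (by linarith)
        have b2 : (-Real.log ‖x‖) ^ (1-m) ≤ (((k:ℝ)+1)*c) ^ (1-m) :=
          Real.rpow_le_rpow_of_nonpos (by positivity) hlogbd (by linarith)
        have b3 : (0:ℝ) ≤ (-Real.log ‖x‖) ^ (1-m) := Real.rpow_nonneg hlogpos.le _
        exact mul_le_mul b1 b2 b3 (by positivity)
      have hle : (‖φ x‖₊ : ℝ≥0∞) ≤ ENNReal.ofReal M := by
        rw [← enorm_eq_nnnorm, ← ofReal_norm]
        exact ENNReal.ofReal_le_ofReal hφbd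
      exact ENNReal.rpow_le_rpow hle hs.le
    have ereal : M ^ s * rk ^ (n:ℕ) = (2:ℝ)^(n:ℝ) * (((k:ℝ)+1)*c) ^ (-(n:ℝ)) := by
      have e0 : M ^ s = rk1 ^ ((1-m)*s) * (((k:ℝ)+1)*c) ^ ((1-m)*s) := by
        rw [hM, Real.mul_rpow (Real.rpow_nonneg hrk1pos.le _) (Real.rpow_nonneg (by positivity) _),
          ← Real.rpow_mul hrk1pos.le, ← Real.rpow_mul (by positivity)]
      have e1 : rk = 2 * rk1 := by rw [hrk, hrk1, pow_succ]; ring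
      have e3 : rk1 ^ (-(n:ℝ)) * rk1 ^ ((n:ℝ)) = 1 := by
        rw [← Real.rpow_add hrk1pos]
        simp
      calc M ^ s * rk ^ (n:ℕ)
          = (rk1 ^ (-(n:ℝ)) * (((k:ℝ)+1)*c) ^ (-(n:ℝ))) * ((2:ℝ)^((n:ℝ)) * rk1 ^ ((n:ℝ))) := by
            rw [e0, hms, ← Real.rpow_natCast rk n, e1,
              Real.mul_rpow (by norm_num) hrk1pos.le]
        _ = (2:ℝ)^((n:ℝ)) * (((k:ℝ)+1)*c) ^ (-(n:ℝ)) * (rk1 ^ (-(n:ℝ)) * rk1 ^ ((n:ℝ))) := by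
            ring
        _ = (2:ℝ)^((n:ℝ)) * (((k:ℝ)+1)*c) ^ (-(n:ℝ)) := by rw [e3]; ring
    calc ∫⁻ x in A k, f x ≤ ∫⁻ _ in A k, ENNReal.ofReal M ^ s :=
          setLIntegral_mono measurable_const hpt
      _ = ENNReal.ofReal M ^ s * volume (A k) := setLIntegral_const _ _
      _ ≤ ENNReal.ofReal M ^ s * volume (ball (0:E) rk) := mul_le_mul_right (measure_mono hAk) _
      _ ≤ ENNReal.ofReal ((2:ℝ) ^ (n:ℝ) * (((k:ℝ)+1) * c) ^ (-(n:ℝ))) * V := by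
          rw [Measure.addHaar_ball volume _ hrkpos.le, finrank_euclideanSpace_fin, ← hV,
            ← mul_assoc, ENNReal.ofReal_rpow_of_nonneg hM0 hs.le,
            ← ENNReal.ofReal_mul (Real.rpow_nonneg hM0 _)]
          exact mul_le_mul_left (ENNReal.ofReal_le_ofReal (le_of_eq ereal)) _
  calc ∫⁻ x in ball (0:E) R, f x
      ≤ ∫⁻ x in {(0:E)} ∪ ⋃ k, A k, f x := lintegral_mono_set hcover
    _ ≤ (∫⁻ x in {(0:E)}, f x) + ∫⁻ x in ⋃ k, A k, f x := lintegral_union_le _ _ _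
    _ ≤ 0 + ∑' k : ℕ, ∫⁻ x in A k, f x := by
        apply add_le_add
        · exact le_of_eq (setLIntegral_measure_zero _ _ (measure_singleton 0))
        · exact lintegral_iUnion_le _ _
    _ ≤ 0 + ∑' k : ℕ, ENNReal.ofReal ((2:ℝ) ^ (n:ℝ) * (((k:ℝ)+1) * c) ^ (-(n:ℝ))) * V := by
        apply add_le_add le_rfl
        exact ENNReal.tsum_le_tsum hbound
    _ = (∑' k : ℕ, ENNReal.ofReal ((2:ℝ) ^ (n:ℝ) * (((k:ℝ)+1) * c) ^ (-(n:ℝ)))) * V := by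
        rw [zero_add, ENNReal.tsum_mul_right]
    _ < ∞ := ENNReal.mul_lt_top (summable_aux hc0 hn).lt_top hVtop.lt_top

end SharpnessAux

namespace SharpnessAux

lemma tendsto_aux {ε q : ℝ} (hε : 0 < ε) (hq : 0 < q) :
    Filter.Tendsto (fun ρ : ℝ => ρ ^ ε * (Real.log 2 - Real.log ρ) ^ q) (𝓝[>] 0) (𝓝 0) := by
  have hid : Filter.Tendsto (fun ρ : ℝ => ρ) (𝓝[>] (0:ℝ)) (𝓝 0) :=
    tendsto_id.mono_right nhdsWithin_le_nhds
  have t1 : Filter.Tendsto (fun ρ : ℝ => ρ ^ (ε/q)) (𝓝[>] (0:ℝ)) (𝓝 0) := by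
    have := hid.rpow_const (p := ε/q) (Or.inr (le_of_lt (div_pos hε hq)))
    simpa [Real.zero_rpow (div_pos hε hq).ne'] using this
  have t2 : Filter.Tendsto (fun ρ : ℝ => Real.log ρ * ρ ^ (ε/q))
      (𝓝[>] (0:ℝ)) (𝓝 0) := tendsto_log_mul_rpow_nhdsGT_zero (div_pos hε hq)
  have th : Filter.Tendsto (fun ρ : ℝ => ρ ^ (ε/q) * (Real.log 2 - Real.log ρ))
      (𝓝[>] (0:ℝ)) (𝓝 0) := by
    have := (t1.const_mul (Real.log 2)).sub t2
    simp only [mul_zero, sub_zero, zero_mul] at this ⊢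
    refine this.congr fun ρ => ?_
    ring
  have tq : Filter.Tendsto (fun ρ : ℝ => (ρ ^ (ε/q) * (Real.log 2 - Real.log ρ)) ^ q)
      (𝓝[>] (0:ℝ)) (𝓝 0) := by
    have := th.rpow_const (p := q) (Or.inr hq.le)
    simpa [Real.zero_rpow hq.ne'] using this
  refine tq.congr' ?_
  filter_upwards [Ioo_mem_nhdsGT (show (0:ℝ) < 1 by norm_num)] with ρ hρ
  obtain ⟨hρ0, hρ1⟩ := hρ
  have hLg : 0 < Real.log 2 - Real.log ρ := by
    have := Real.log_neg hρ0 hρ1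
    have := Real.log_pos (by norm_num : (1:ℝ) < 2)
    linarith
  rw [Real.mul_rpow (Real.rpow_nonneg hρ0.le _) hLg.le, ← Real.rpow_mul hρ0.le,
    div_mul_cancel₀ _ hq.ne']

end SharpnessAux

namespace SharpnessAux

lemma key_ineq (n : ℕ) (hn : 2 ≤ n) (m R : ℝ) (hm : 1 < m) (hR₀ : 0 < R) (hR₁ : R < 1)
    (ε p' : ℝ) (hε : 0 < ε) (hp1 : 1 < p')
    (C : ℝ≥0∞) (hCtop : C ≠ ⊤)
    (hC : ∀ ρ : ℝ, 0 < ρ →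
      ∫⁻ x in ball (0 : EuclideanSpace ℝ (Fin n)) ρ ∩ ball 0 R,
        (‖(1 / (‖x‖ ^ m * |Real.log ‖x‖| ^ (m - 1))) • x‖₊ : ℝ≥0∞) ^ p'
        ≤ C * ENNReal.ofReal (ρ ^ ((n:ℝ) - (m-1)*p' + ε)))
    {ρ : ℝ} (hρ0 : 0 < ρ) (hρR : ρ ≤ R) :
    (volume (ball (0 : EuclideanSpace ℝ (Fin n)) 1)).toReal / 2
      ≤ C.toReal * (ρ ^ ε * (Real.log 2 - Real.log ρ) ^ ((m-1)*p')) := by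
  haveI : Nonempty (Fin n) := ⟨⟨0, by omega⟩⟩
  set E := EuclideanSpace ℝ (Fin n)
  set φ : E → E := fun x => (1 / (‖x‖ ^ m * |Real.log ‖x‖| ^ (m - 1))) • x with hφ
  set q : ℝ := (m-1)*p' with hqdef
  have hq : 0 < q := mul_pos (by linarith) (by linarith)
  set θ : ℝ := (n:ℝ) - q + ε with hθ
  set v : ℝ := (volume (ball (0:E) 1)).toReal with hv
  have hV : volume (ball (0:E) 1) = ENNReal.ofReal v :=
    (ENNReal.ofReal_toReal measure_ball_lt_top.ne).symm
  have hv0 : 0 < v := ENNReal.toReal_pos (measure_ball_pos _ _ one_pos).ne' measure_ball_lt_top.ne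
  have hρ1 : ρ < 1 := lt_of_le_of_lt hρR hR₁
  set Lg : ℝ := Real.log 2 - Real.log ρ with hLgdef
  have hLg : 0 < Lg := by
    have := Real.log_neg hρ0 hρ1
    have := Real.log_pos (by norm_num : (1:ℝ) < 2)
    rw [hLgdef]; linarith
  set L : ℝ := ρ ^ (1-m) * Lg ^ (1-m) with hL
  have hL0 : 0 ≤ L := by
    rw [hL]; positivity
  set S : Set E := ball 0 ρ \ ball 0 (ρ/2) with hS
  -- pointwise lower bound on S
  have hpt : ∀ x ∈ S, ENNReal.ofReal (L ^ p') ≤ (‖φ x‖₊ : ℝ≥0∞) ^ p' := by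
    intro x hx
    have hxlt : ‖x‖ < ρ := by
      have := hx.1; simp only [mem_ball, dist_zero_right] at this; exact this
    have hxge : ρ/2 ≤ ‖x‖ := by
      have := hx.2; simp only [mem_ball, dist_zero_right, not_lt] at this; exact this
    have hx0 : 0 < ‖x‖ := lt_of_lt_of_le (by linarith) hxge
    have hx1 : ‖x‖ < 1 := lt_trans hxlt hρ1
    have hlogx : 0 < -Real.log ‖x‖ := by have := Real.log_neg hx0 hx1; linarith
    have hlogle : -Real.log ‖x‖ ≤ Lg := by
      have h1 : Real.log (ρ/2) ≤ Real.log ‖x‖ := Real.log_le_log (by linarith) hxge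
      have h2 : Real.log (ρ/2) = Real.log ρ - Real.log 2 := Real.log_div hρ0.ne' two_ne_zero
      rw [hLgdef]; linarith
    have hnorm := norm_phi m x hx0 hx1
    have hLle : L ≤ ‖φ x‖ := by
      rw [hφ]; simp only; rw [hnorm, hL]
      have b1 : ρ ^ (1-m) ≤ ‖x‖ ^ (1-m) :=
        Real.rpow_le_rpow_of_nonpos hx0 hxlt.le (by linarith)
      have b2 : Lg ^ (1-m) ≤ (-Real.log ‖x‖) ^ (1-m) :=
        Real.rpow_le_rpow_of_nonpos hlogx hlogle (by linarith)
      exact mul_le_mul b1 b2 (Real.rpow_nonneg hLg.le _) (Real.rpow_nonneg hx0.le _)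
    calc ENNReal.ofReal (L ^ p') = ENNReal.ofReal L ^ p' :=
          (ENNReal.ofReal_rpow_of_nonneg hL0 (by linarith)).symm
      _ ≤ (‖φ x‖₊ : ℝ≥0∞) ^ p' := by
          apply ENNReal.rpow_le_rpow _ (by linarith)
          rw [← enorm_eq_nnnorm, ← ofReal_norm]
          exact ENNReal.ofReal_le_ofReal hLle
  have hfmeas : Measurable fun x : E => (‖φ x‖₊ : ℝ≥0∞) ^ p' :=
    ((meas_phi m).nnnorm.coe_nnreal_ennreal).pow measurable_const
  have hSsub : S ⊆ ball 0 ρ ∩ ball 0 R :=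
    fun x hx => ⟨hx.1, ball_subset_ball hρR hx.1⟩
  have volS : volume S = ENNReal.ofReal (ρ^(n:ℕ) - (ρ/2)^(n:ℕ)) * ENNReal.ofReal v := by
    rw [hS, measure_diff (ball_subset_ball (by linarith))
      measurableSet_ball.nullMeasurableSet measure_ball_lt_top.ne,
      Measure.addHaar_ball volume _ hρ0.le, Measure.addHaar_ball volume _ (by linarith : (0:ℝ) ≤ ρ/2),
      finrank_euclideanSpace_fin, ← hV, ← ENNReal.sub_mul (fun _ _ => measure_ball_lt_top.ne),
      ENNReal.ofReal_sub _ (by positivity)]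
  have hlower : ENNReal.ofReal (L ^ p' * ((ρ^(n:ℕ) - (ρ/2)^(n:ℕ)) * v))
      ≤ C * ENNReal.ofReal (ρ ^ θ) := by
    calc ENNReal.ofReal (L ^ p' * ((ρ^(n:ℕ) - (ρ/2)^(n:ℕ)) * v))
        = ENNReal.ofReal (L ^ p') * (ENNReal.ofReal (ρ^(n:ℕ) - (ρ/2)^(n:ℕ)) * ENNReal.ofReal v) := by
          have hsub : (0:ℝ) ≤ ρ^(n:ℕ) - (ρ/2)^(n:ℕ) := by
            have : (ρ/2)^(n:ℕ) ≤ ρ^(n:ℕ) := pow_le_pow_left₀ (by linarith) (by linarith) n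
            linarith
          rw [ENNReal.ofReal_mul (Real.rpow_nonneg hL0 _), ENNReal.ofReal_mul hsub]
      _ = ENNReal.ofReal (L ^ p') * volume S := by rw [volS]
      _ = ∫⁻ _ in S, ENNReal.ofReal (L ^ p') := (setLIntegral_const _ _).symm
      _ ≤ ∫⁻ x in S, (‖φ x‖₊ : ℝ≥0∞) ^ p' := setLIntegral_mono hfmeas hpt
      _ ≤ ∫⁻ x in ball (0:E) ρ ∩ ball 0 R, (‖φ x‖₊ : ℝ≥0∞) ^ p' := lintegral_mono_set hSsub
      _ ≤ C * ENNReal.ofReal (ρ ^ θ) := hC ρ hρ0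
  -- convert to a real inequality
  have real1 : L ^ p' * ((ρ^(n:ℕ) - (ρ/2)^(n:ℕ)) * v) ≤ C.toReal * ρ ^ θ := by
    have hsub : (0:ℝ) ≤ ρ^(n:ℕ) - (ρ/2)^(n:ℕ) := by
      have : (ρ/2)^(n:ℕ) ≤ ρ^(n:ℕ) := pow_le_pow_left₀ (by linarith) (by linarith) n
      linarith
    have h1 := ENNReal.toReal_mono (ENNReal.mul_ne_top hCtop ENNReal.ofReal_ne_top) hlower
    rwa [ENNReal.toReal_ofReal
        (mul_nonneg (Real.rpow_nonneg hL0 _) (mul_nonneg hsub hv0.le)),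
      ENNReal.toReal_mul, ENNReal.toReal_ofReal (Real.rpow_nonneg hρ0.le _)] at h1
  -- real algebra
  have hpow2 : ρ^(n:ℕ) - (ρ/2)^(n:ℕ) ≥ ρ ^ ((n:ℝ)) / 2 := by
    have hhalf : ((1:ℝ)/2)^(n:ℕ) ≤ 1/2 := by
      calc ((1:ℝ)/2)^(n:ℕ) ≤ (1/2)^(1:ℕ) :=
            pow_le_pow_of_le_one (by norm_num) (by norm_num) (by omega)
        _ = 1/2 := by norm_num
    have e : (ρ/2)^(n:ℕ) = ρ^(n:ℕ) * (1/2:ℝ)^(n:ℕ) := by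
      rw [← mul_pow]; ring_nf
    have hρn : 0 < ρ^(n:ℕ) := pow_pos hρ0 n
    have : (ρ/2)^(n:ℕ) ≤ ρ^(n:ℕ) * (1/2) := by
      rw [e]; exact mul_le_mul_of_nonneg_left hhalf hρn.le
    have ecast : ρ ^ ((n:ℝ)) = ρ^(n:ℕ) := Real.rpow_natCast ρ n
    rw [ecast]; linarith
  have hLp : L ^ p' = ρ ^ (-q) * Lg ^ (-q) := by
    rw [hL, Real.mul_rpow (Real.rpow_nonneg hρ0.le _) (Real.rpow_nonneg hLg.le _),
      ← Real.rpow_mul hρ0.le, ← Real.rpow_mul hLg.le]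
    have : (1-m) * p' = -q := by rw [hqdef]; ring
    rw [this]
  have key2 : (v/2) * (ρ ^ ((n:ℝ) - q) * Lg ^ (-q)) ≤ C.toReal * ρ ^ θ := by
    have hL2 : (v/2) * (ρ ^ ((n:ℝ) - q) * Lg ^ (-q))
        ≤ L ^ p' * ((ρ^(n:ℕ) - (ρ/2)^(n:ℕ)) * v) := by
      rw [hLp]
      have e : ρ ^ ((n:ℝ) - q) = ρ ^ ((n:ℝ)) * ρ ^ (-q) := by
        rw [← Real.rpow_add hρ0]; ring_nf
      rw [e]
      have h1 : ρ ^ (-q) * Lg ^ (-q) * (ρ ^ ((n:ℝ)) / 2 * v)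
          ≤ ρ ^ (-q) * Lg ^ (-q) * ((ρ^(n:ℕ) - (ρ/2)^(n:ℕ)) * v) := by
        apply mul_le_mul_of_nonneg_left _ (by positivity)
        exact mul_le_mul_of_nonneg_right hpow2 hv0.le
      calc (v/2) * (ρ ^ ((n:ℝ)) * ρ ^ (-q) * Lg ^ (-q))
          = ρ ^ (-q) * Lg ^ (-q) * (ρ ^ ((n:ℝ)) / 2 * v) := by ring
        _ ≤ ρ ^ (-q) * Lg ^ (-q) * ((ρ^(n:ℕ) - (ρ/2)^(n:ℕ)) * v) := h1
        _ = ρ ^ (-q) * Lg ^ (-q) * ((ρ^(n:ℕ) - (ρ/2)^(n:ℕ)) * v) := rfl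
    exact le_trans hL2 real1
  -- divide through
  have hρnq : 0 < ρ ^ ((n:ℝ) - q) := Real.rpow_pos_of_pos hρ0 _
  have hLgq : 0 < Lg ^ q := Real.rpow_pos_of_pos hLg _
  have eθ : ρ ^ θ = ρ ^ ((n:ℝ) - q) * ρ ^ ε := by
    rw [hθ, ← Real.rpow_add hρ0]
  have eLg : Lg ^ (-q) * Lg ^ q = 1 := by
    rw [← Real.rpow_add hLg]; simp
  have key3 : (v/2) * ρ ^ ((n:ℝ) - q) ≤ (C.toReal * (ρ ^ ε * Lg ^ q)) * ρ ^ ((n:ℝ) - q) := by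
    have := mul_le_mul_of_nonneg_right key2 hLgq.le
    rw [eθ] at this
    calc (v/2) * ρ ^ ((n:ℝ) - q)
        = (v/2) * (ρ ^ ((n:ℝ) - q) * Lg ^ (-q)) * Lg ^ q := by
          rw [mul_assoc, mul_assoc, eLg]; ring
      _ ≤ C.toReal * (ρ ^ ((n:ℝ) - q) * ρ ^ ε) * Lg ^ q := this
      _ = (C.toReal * (ρ ^ ε * Lg ^ q)) * ρ ^ ((n:ℝ) - q) := by ring
  have := (mul_le_mul_iff_of_pos_right hρnq).mp key3
  rw [hv, hqdef] at *
  exact this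

end SharpnessAux

/-- The field `φ(x) = x/(|x|^m |log|x||^{m-1})` lies in `L^{n/(m-1)}(B_R; ℝⁿ)`
but in no Morrey space `L^{p', n-(m-1)p'+ε}(B_R; ℝⁿ)` with `ε > 0` and
`p' ∈ (1, n/(m-1)]`. -/
theorem sharpness_phi (n : ℕ) (hn : 2 ≤ n) (m R : ℝ)
    (hm : 1 < m) (hmn : m ≤ n) (hR₀ : 0 < R) (hR₁ : R < 1) :
    let φ : EuclideanSpace ℝ (Fin n) → EuclideanSpace ℝ (Fin n) :=
      fun x => (1 / (‖x‖ ^ m * |Real.log ‖x‖| ^ (m - 1))) • x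
    let B : Set (EuclideanSpace ℝ (Fin n)) := ball 0 R
    MemLp φ (ENNReal.ofReal ((n : ℝ) / (m - 1))) (volume.restrict B) ∧
      ∀ ε > (0 : ℝ), ∀ p' : ℝ, 1 < p' → p' ≤ (n : ℝ) / (m - 1) →
        ¬ MemMorreyVec n B φ p' ((n : ℝ) - (m - 1) * p' + ε) := by
  intro φ B
  have hnpos : (0:ℝ) < n := by positivity
  have hs : (0:ℝ) < (n:ℝ)/(m-1) := div_pos hnpos (by linarith)
  constructor
  · refine ⟨(SharpnessAux.meas_phi m).aestronglyMeasurable, ?_⟩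
    rw [eLpNorm_eq_lintegral_rpow_enorm_toReal
      (by rw [Ne, ENNReal.ofReal_eq_zero]; linarith) ENNReal.ofReal_ne_top,
      ENNReal.toReal_ofReal hs.le]
    apply ENNReal.rpow_lt_top_of_nonneg (by positivity)
    exact (SharpnessAux.lintegral_phi_lt_top n hn m R hm hmn hR₀ hR₁).ne
  · intro ε hε p' hp1 hp2 hmem
    obtain ⟨-, C, hCtop, hC⟩ := hmem
    have hq : 0 < (m-1)*p' := mul_pos (by linarith) (by linarith)
    have key := fun (ρ : ℝ) (hρ0 : 0 < ρ) (hρR : ρ ≤ R) =>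
      SharpnessAux.key_ineq n hn m R hm hR₀ hR₁ ε p' hε hp1 C hCtop
        (fun ρ hρ => hC 0 (mem_ball_self hR₀) ρ hρ) hρ0 hρR
    set v : ℝ := (volume (ball (0 : EuclideanSpace ℝ (Fin n)) 1)).toReal with hv
    have hv0 : 0 < v :=
      ENNReal.toReal_pos (measure_ball_pos _ _ one_pos).ne' measure_ball_lt_top.ne
    have htd : Filter.Tendsto
        (fun ρ : ℝ => C.toReal * (ρ ^ ε * (Real.log 2 - Real.log ρ) ^ ((m-1)*p')))
        (𝓝[>] 0) (𝓝 0) := by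
      have := (SharpnessAux.tendsto_aux hε hq).const_mul C.toReal
      simpa using this
    have hev := htd.eventually_lt_const (by linarith : (0:ℝ) < v/2)
    obtain ⟨ρ, h1, h2⟩ :=
      (hev.and (Filter.eventually_of_mem (Ioo_mem_nhdsGT hR₀)
        (fun x hx => hx))).exists
    have := key ρ h2.1 h2.2.le
    linarith
end
end
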